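/- In the real Clifford algebra Cl(15,0), the element ψ = (7·e_{123456789ABCDEF} - Φ)/8 satisfies ψ² = -1, where Φ = Φ_A + Φ_O + Φ_P is the 7-form calibration with Φ_A = e1234567, Φ_O = e_{12389AB} + e_{14589CD} + e_{16789EF} + e_{2468ACE} + e_{2578ADF} + e_{3478BCF} + e_{3568BDE}, and Φ_P = e_{123CDEF} + e_{145ABEF} + e_{167ABCD} + e_{2469BDF} + e_{2579BCE} + e_{3479ADE} + e_{3569ACF}. -/

import Mathlib

noncomputable def Q15 : QuadraticForm ℝ (Fin 15 → ℝ) :=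
  QuadraticMap.weightedSumSquares ℝ (fun _ : Fin 15 => (1 : ℝ))

noncomputable def e15 (i : Fin 15) : CliffordAlgebra Q15 :=
  CliffordAlgebra.ι Q15 (Pi.single i 1)

/-- Product of generators with the given (0-based) indices;
hexadecimal index k of the paper corresponds to k-1 here. -/
noncomputable def p15 (l : List (Fin 15)) : CliffordAlgebra Q15 := (l.map e15).prod

/-- Φ_A = e1234567. -/
noncomputable def ΦA : CliffordAlgebra Q15 := p15 [0,1,2,3,4,5,6]

/-- Φ_O = e_{12389AB} + e_{14589CD} + e_{16789EF} + e_{2468ACE} + e_{2578ADF}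
  + e_{3478BCF} + e_{3568BDE}. -/
noncomputable def ΦO : CliffordAlgebra Q15 :=
  p15 [0,1,2,7,8,9,10] + p15 [0,3,4,7,8,11,12] + p15 [0,5,6,7,8,13,14]
    + p15 [1,3,5,7,9,11,13] + p15 [1,4,6,7,9,12,14] + p15 [2,3,6,7,10,11,14]
    + p15 [2,4,5,7,10,12,13]

/-- Φ_P = e_{123CDEF} + e_{145ABEF} + e_{167ABCD} + e_{2469BDF} + e_{2579BCE}
  + e_{3479ADE} + e_{3569ACF}. -/
noncomputable def ΦP : CliffordAlgebra Q15 :=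
  p15 [0,1,2,11,12,13,14] + p15 [0,3,4,9,10,13,14] + p15 [0,5,6,9,10,11,12]
    + p15 [1,3,5,8,10,12,14] + p15 [1,4,6,8,10,11,13] + p15 [2,3,6,8,9,12,13]
    + p15 [2,4,5,8,9,11,14]

/-- The pseudoscalar e_{123456789ABCDEF}. -/
noncomputable def ω15 : CliffordAlgebra Q15 :=
  p15 [0,1,2,3,4,5,6,7,8,9,10,11,12,13,14]

lemma e15_sq (i : Fin 15) : e15 i * e15 i = 1 := by
  rw [e15, CliffordAlgebra.ι_sq_scalar]
  simp [Q15, QuadraticMap.weightedSumSquares_apply, Pi.single_apply]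
  exact (algebraMap ℝ (CliffordAlgebra Q15)).map_one

lemma e15_anticomm {i j : Fin 15} (h : i ≠ j) : e15 i * e15 j = -(e15 j * e15 i) := by
  have hp := CliffordAlgebra.ι_mul_ι_add_swap (Q := Q15) (Pi.single i 1) (Pi.single j 1)
  have hpol : QuadraticMap.polar Q15 (Pi.single i 1) (Pi.single j 1) = 0 := by
    simp only [QuadraticMap.polar, Q15, QuadraticMap.weightedSumSquares_apply, Pi.add_apply,
      Pi.single_apply, smul_eq_mul, one_mul]
    have key : ∀ x : Fin 15, ((if x = i then (1:ℝ) else 0) + if x = j then 1 else 0) *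
        ((if x = i then (1:ℝ) else 0) + if x = j then 1 else 0)
        = (if x = i then 1 else 0) + (if x = j then 1 else 0) := by
      intro x
      by_cases hx : x = i <;> by_cases hy : x = j <;>
        first
        | (exact absurd (hx ▸ hy ▸ rfl : i = j) h)
        | simp [hx, hy, h, Ne.symm h]
    rw [Finset.sum_congr rfl fun x _ => key x]
    simp [Finset.sum_add_distrib, Finset.sum_ite_eq']
  rw [hpol, map_zero] at hp
  exact eq_neg_of_add_eq_zero_left hp

lemma p15_nil : p15 [] = 1 := rfl

lemma p15_cons (i : Fin 15) (l : List (Fin 15)) : p15 (i :: l) = e15 i * p15 l := by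
  simp [p15]

lemma p15_append (l l' : List (Fin 15)) : p15 (l ++ l') = p15 l * p15 l' := by
  simp [p15, List.prod_append]

/-- Insert a generator into a product, with sign and cancellation. -/
def cins (i : Fin 15) : List (Fin 15) → ℤ × List (Fin 15)
  | [] => (1, [i])
  | j :: t =>
    if i = j then (1, t)
    else if i < j then (1, i :: j :: t)
    else (-(cins i t).1, j :: (cins i t).2)

lemma cins_spec (i : Fin 15) (l : List (Fin 15)) :
    e15 i * p15 l = (cins i l).1 • p15 (cins i l).2 := by
  induction l with
  | nil => simp [cins, p15_cons, p15_nil]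
  | cons j t ih =>
    by_cases h1 : i = j
    · subst h1
      simp [cins, p15_cons, ← mul_assoc, e15_sq]
    · by_cases h2 : i < j
      · simp [cins, h1, h2, p15_cons]
      · rw [cins]
        simp only [h1, h2, if_false]
        rw [p15_cons, ← mul_assoc, e15_anticomm h1, neg_mul, mul_assoc, ih,
          p15_cons, neg_smul, mul_smul_comm]

/-- Normalize a word: insertion sort with sign tracking and cancellation. -/
def cnrm : List (Fin 15) → ℤ × List (Fin 15)
  | [] => (1, [])
  | i :: t => ((cnrm t).1 * (cins i (cnrm t).2).1, (cins i (cnrm t).2).2)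

lemma cnrm_spec (l : List (Fin 15)) : p15 l = (cnrm l).1 • p15 (cnrm l).2 := by
  induction l with
  | nil => simp [cnrm]
  | cons i t ih =>
    rw [p15_cons, ih, mul_smul_comm, cins_spec, cnrm, smul_smul]

abbrev CTerm := ℤ × List (Fin 15)

noncomputable def cev : List CTerm → CliffordAlgebra Q15
  | [] => 0
  | (c, L) :: t => c • p15 L + cev t

/-- Insert a term into a collected list, merging coefficients of equal words. -/
def cinsT (x : CTerm) : List CTerm → List CTerm
  | [] => [x]
  | (d, M) :: t => if x.2 = M then (if x.1 + d = 0 then t else (x.1 + d, M) :: t)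
      else (d, M) :: cinsT x t

lemma cev_cinsT (x : CTerm) (t : List CTerm) :
    cev (cinsT x t) = x.1 • p15 x.2 + cev t := by
  induction t with
  | nil => simp [cinsT, cev]
  | cons y s ih =>
    obtain ⟨d, M⟩ := y
    by_cases h : x.2 = M
    · by_cases h0 : x.1 + d = 0
      · have hz : x.1 • p15 M + d • p15 M = 0 := by
          rw [← add_smul, h0, zero_smul]
        simp only [cinsT, h, h0, if_true, ite_true, cev]
        rw [← add_assoc, hz, zero_add]
      · simp [cinsT, h, h0, cev, add_smul, add_assoc]
    · simp only [cinsT, h, if_false, cev, ih]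
      rw [add_left_comm]

def cnt (x : CTerm) : CTerm := (x.1 * (cnrm x.2).1, (cnrm x.2).2)

lemma cev_cnt (x : CTerm) : (cnt x).1 • p15 (cnt x).2 = x.1 • p15 x.2 := by
  rw [cnt]
  rw [show x.1 • p15 x.2 = x.1 • ((cnrm x.2).1 • p15 (cnrm x.2).2) from by rw [← cnrm_spec]]
  rw [smul_smul]

/-- Normalize and collect a formal sum. -/
def cnorm (l : List CTerm) : List CTerm := (l.map cnt).foldr cinsT []

lemma cev_cnorm (l : List CTerm) : cev (cnorm l) = cev l := by
  induction l with
  | nil => rfl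
  | cons x t ih =>
    rw [cnorm, List.map_cons, List.foldr_cons, cev_cinsT, ← cnorm, ih, cev, cev_cnt]

/-- Formal multiplication. -/
def cmul (l₁ l₂ : List CTerm) : List CTerm :=
  l₁.flatMap (fun x => l₂.map (fun y => (x.1 * y.1, x.2 ++ y.2)))

lemma cev_append (a b : List CTerm) : cev (a ++ b) = cev a + cev b := by
  induction a with
  | nil => simp [cev]
  | cons z r ihr => simp [cev, ihr, add_assoc]

lemma cev_mapmul (c : ℤ) (L : List (Fin 15)) (l : List CTerm) :
    cev (l.map (fun y => (c * y.1, L ++ y.2))) = c • (p15 L * cev l) := by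
  induction l with
  | nil => simp [cev]
  | cons y s ihs =>
    obtain ⟨d, M⟩ := y
    simp only [List.map_cons, cev, ihs, p15_append, mul_add, mul_smul_comm, smul_add, smul_smul]

lemma cev_cmul (l₁ l₂ : List CTerm) : cev (cmul l₁ l₂) = cev l₁ * cev l₂ := by
  induction l₁ with
  | nil => simp [cmul, cev]
  | cons x t ih =>
    obtain ⟨c, L⟩ := x
    rw [cmul, List.flatMap_cons, cev_append, ← cmul, ih, cev, add_mul, cev_mapmul]
    simp [smul_mul_assoc, mul_assoc]

def X16 : List CTerm :=
  [(7, [0,1,2,3,4,5,6,7,8,9,10,11,12,13,14]),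
   (-1, [0,1,2,3,4,5,6]),
   (-1, [0,1,2,7,8,9,10]), (-1, [0,3,4,7,8,11,12]), (-1, [0,5,6,7,8,13,14]),
   (-1, [1,3,5,7,9,11,13]), (-1, [1,4,6,7,9,12,14]), (-1, [2,3,6,7,10,11,14]),
   (-1, [2,4,5,7,10,12,13]),
   (-1, [0,1,2,11,12,13,14]), (-1, [0,3,4,9,10,13,14]), (-1, [0,5,6,9,10,11,12]),
   (-1, [1,3,5,8,10,12,14]), (-1, [1,4,6,8,10,11,13]), (-1, [2,3,6,8,9,12,13]),
   (-1, [2,4,5,8,9,11,14])]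

lemma cev_X16 : cev X16 = 7 * ω15 - (ΦA + ΦO + ΦP) := by
  simp only [X16, cev, ΦA, ΦO, ΦP, ω15, neg_smul, one_smul, add_zero]
  have h7 : (7 : ℤ) • ω15 = 7 * ω15 := by
    rw [zsmul_eq_mul]; norm_num
  rw [ω15] at h7
  rw [h7]
  abel

set_option maxRecDepth 100000 in
lemma key16 : cnorm (cmul X16 X16) = [(-64, [])] := by decide

/-- ψ = (7·e_{123456789ABCDEF} - Φ)/8 satisfies ψ² = -1, for Φ = Φ_A + Φ_O + Φ_P. -/
theorem stmt16 : ((8 : ℝ)⁻¹ • (7 * ω15 - (ΦA + ΦO + ΦP))) ^ 2 = -1 := by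
  rw [← cev_X16, pow_two, smul_mul_smul_comm, ← cev_cmul, ← cev_cnorm, key16]
  simp only [cev, p15_nil, smul_eq_mul, add_zero]
  rw [show ((-64 : ℤ) • (1 : CliffordAlgebra Q15)) = ((-64 : ℝ) • 1) from by
    rw [← Int.cast_smul_eq_zsmul ℝ]; norm_num]
  rw [smul_smul]
  norm_num
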